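/- For z ∈ (-1,1), the centroid x̄(z) = (1/M(z)) ∫_{-1}^{z} 2x√(1-x²) dx of the left circular segment satisfies x̄(z) ≥ (z-1)/2. -/

import Mathlib

open Real intervalIntegral

/-- Area of the portion of the unit disk with first coordinate at most `z`. -/
noncomputable def diskMass (z : ℝ) : ℝ := ∫ x in (-1 : ℝ)..z, 2 * Real.sqrt (1 - x ^ 2)

/-- `x`-coordinate of the centroid of the portion of the unit disk with `x ≤ z`. -/
noncomputable def diskCentroid (z : ℝ) : ℝ :=
  (∫ x in (-1 : ℝ)..z, 2 * x * Real.sqrt (1 - x ^ 2)) / diskMass z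

/-- Moment of inertia about its centroid of the portion of the unit disk with `x ≤ z`. -/
noncomputable def diskInertia (z : ℝ) : ℝ :=
  ∫ x in (-1 : ℝ)..z, ∫ y in (-Real.sqrt (1 - x ^ 2))..Real.sqrt (1 - x ^ 2),
    (y ^ 2 + (x - diskCentroid z) ^ 2)

/-- The centroid of the left circular segment is at least `(z-1)/2`. -/
lemma sqrt_cube_deriv {t : ℝ} (ht : 0 ≤ t) :
    HasDerivAt (fun s => Real.sqrt s ^ 3) (3 / 2 * Real.sqrt t) t := by
  rcases eq_or_lt_of_le ht with h | h
  · subst h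
    simp only [Real.sqrt_zero, mul_zero]
    rw [hasDerivAt_iff_tendsto_slope]
    have hb : ∀ s : ℝ, ‖slope (fun s => Real.sqrt s ^ 3) 0 s‖ ≤ Real.sqrt |s| := by
      intro s
      rcases le_or_gt s 0 with hs | hs
      · rw [slope_def_field, Real.sqrt_eq_zero'.mpr hs]
        simp [Real.sqrt_nonneg]
      · have : slope (fun s => Real.sqrt s ^ 3) 0 s = Real.sqrt s := by
          rw [slope_def_field, Real.sqrt_zero]
          rw [show (Real.sqrt s ^ 3 - 0 ^ 3) / (s - 0) = Real.sqrt s ^ 3 / s by ring,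
            show Real.sqrt s ^ 3 = Real.sqrt s ^ 2 * Real.sqrt s by ring,
            Real.sq_sqrt hs.le, mul_div_cancel_left₀ _ hs.ne']
        rw [this, Real.norm_eq_abs, abs_of_nonneg (Real.sqrt_nonneg _), abs_of_pos hs]
    have hg : Filter.Tendsto (fun s : ℝ => Real.sqrt |s|) (nhdsWithin 0 {0}ᶜ) (nhds 0) := by
      have : Filter.Tendsto (fun s : ℝ => Real.sqrt |s|) (nhds 0) (nhds 0) := by
        have := (Real.continuous_sqrt.comp continuous_abs).tendsto 0
        simpa [Function.comp_def] using this
      exact this.mono_left nhdsWithin_le_nhds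
    exact squeeze_zero_norm hb hg
  · have hs : HasDerivAt Real.sqrt (1 / (2 * Real.sqrt t)) t := Real.hasDerivAt_sqrt h.ne'
    have h2 := hs.pow 3
    refine h2.congr_deriv (Eq.symm ?_)
    have h1 : Real.sqrt t ≠ 0 := by positivity
    have h2t : Real.sqrt t ^ 2 = t := Real.sq_sqrt ht
    field_simp
    norm_num


theorem diskCentroid_ge (z : ℝ) (hz : z ∈ Set.Ioo (-1 : ℝ) 1) :
    (z - 1) / 2 ≤ diskCentroid z := by
  obtain ⟨hz1, hz2⟩ := hz
  -- numerator computation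
  have hderivN : ∀ x ∈ Set.uIcc (-1 : ℝ) z,
      HasDerivAt (fun x : ℝ => -(2 / 3) * Real.sqrt (1 - x ^ 2) ^ 3)
        (2 * x * Real.sqrt (1 - x ^ 2)) x := by
    intro x hx
    rw [Set.uIcc_of_le (by linarith)] at hx
    have h0 : (0 : ℝ) ≤ 1 - x ^ 2 := by nlinarith [hx.1, hx.2]
    have h1 : HasDerivAt (fun x : ℝ => 1 - x ^ 2) (-(2 * x)) x := by
      simpa using ((hasDerivAt_pow 2 x).const_sub 1)
    have h2 := ((sqrt_cube_deriv h0).comp x h1).const_mul (-(2 / 3 : ℝ))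
    refine h2.congr_deriv (Eq.symm ?_)
    have : Real.sqrt (1 - x ^ 2) * Real.sqrt (1 - x ^ 2) = 1 - x ^ 2 :=
      Real.mul_self_sqrt h0
    ring
  have hcontN : Continuous fun x : ℝ => 2 * x * Real.sqrt (1 - x ^ 2) := by fun_prop
  have hN : (∫ x in (-1 : ℝ)..z, 2 * x * Real.sqrt (1 - x ^ 2))
      = -(2 / 3) * Real.sqrt (1 - z ^ 2) ^ 3 := by
    rw [intervalIntegral.integral_eq_sub_of_hasDerivAt hderivN
      (hcontN.intervalIntegrable _ _)]
    norm_num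
  -- lower bound for the mass
  have hderivM : ∀ x ∈ Set.uIcc (-1 : ℝ) z,
      HasDerivAt (fun x : ℝ => 4 / 3 * Real.sqrt (1 - z) * Real.sqrt (1 + x) ^ 3)
        (2 * Real.sqrt (1 - z) * Real.sqrt (1 + x)) x := by
    intro x hx
    rw [Set.uIcc_of_le (by linarith)] at hx
    have h0 : (0 : ℝ) ≤ 1 + x := by linarith [hx.1]
    have h1 : HasDerivAt (fun x : ℝ => 1 + x) 1 x := by
      simpa using (hasDerivAt_id x).const_add 1
    have h2 := ((sqrt_cube_deriv h0).comp x h1).const_mul (4 / 3 * Real.sqrt (1 - z))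
    refine h2.congr_deriv (Eq.symm ?_)
    ring
  have hcontM : Continuous fun x : ℝ => 2 * Real.sqrt (1 - z) * Real.sqrt (1 + x) := by
    fun_prop
  have hM0 : (∫ x in (-1 : ℝ)..z, 2 * Real.sqrt (1 - z) * Real.sqrt (1 + x))
      = 4 / 3 * Real.sqrt (1 - z) * Real.sqrt (1 + z) ^ 3 := by
    rw [intervalIntegral.integral_eq_sub_of_hasDerivAt hderivM
      (hcontM.intervalIntegrable _ _)]
    norm_num
  have hmono : (∫ x in (-1 : ℝ)..z, 2 * Real.sqrt (1 - z) * Real.sqrt (1 + x))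
      ≤ diskMass z := by
    unfold diskMass
    apply intervalIntegral.integral_mono_on (by linarith)
      (hcontM.intervalIntegrable _ _)
      ((by fun_prop : Continuous fun x : ℝ => 2 * Real.sqrt (1 - x ^ 2)).intervalIntegrable _ _)
    intro x hx
    have h0 : (0 : ℝ) ≤ 1 - x := by linarith [hx.2]
    have h1 : (0 : ℝ) ≤ 1 + x := by linarith [hx.1]
    have key : Real.sqrt (1 - x ^ 2) = Real.sqrt (1 - x) * Real.sqrt (1 + x) := by
      rw [← Real.sqrt_mul h0]
      ring_nf
    rw [key]
    have h2 : Real.sqrt (1 - z) ≤ Real.sqrt (1 - x) :=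
      Real.sqrt_le_sqrt (by linarith [hx.2])
    nlinarith [Real.sqrt_nonneg (1 + x), Real.sqrt_nonneg (1 - z)]
  have hM0pos : 0 < 4 / 3 * Real.sqrt (1 - z) * Real.sqrt (1 + z) ^ 3 := by
    have := Real.sqrt_pos.mpr (by linarith : (0:ℝ) < 1 - z)
    have := Real.sqrt_pos.mpr (by linarith : (0:ℝ) < 1 + z)
    positivity
  have hMpos : 0 < diskMass z := lt_of_lt_of_le hM0pos (hM0 ▸ hmono)
  -- the key equality
  have hkey : (z - 1) / 2 * (4 / 3 * Real.sqrt (1 - z) * Real.sqrt (1 + z) ^ 3)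
      = -(2 / 3) * Real.sqrt (1 - z ^ 2) ^ 3 := by
    have e1 : Real.sqrt (1 - z ^ 2) = Real.sqrt (1 - z) * Real.sqrt (1 + z) := by
      rw [← Real.sqrt_mul (by linarith : (0:ℝ) ≤ 1 - z)]
      ring_nf
    have e2 : Real.sqrt (1 - z) ^ 2 = 1 - z := Real.sq_sqrt (by linarith)
    rw [e1]
    nlinarith [e2, Real.sqrt_nonneg (1 + z)]
  rw [diskCentroid, hN, le_div_iff₀ hMpos]
  calc (z - 1) / 2 * diskMass z
      ≤ (z - 1) / 2 * (4 / 3 * Real.sqrt (1 - z) * Real.sqrt (1 + z) ^ 3) := by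
        apply mul_le_mul_of_nonpos_left (hM0 ▸ hmono) (by linarith)
    _ = -(2 / 3) * Real.sqrt (1 - z ^ 2) ^ 3 := hkey
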